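/- Let A be a C*-algebra, E a Hilbert A-module, and T : E → E adjointable with adjoint T*. Let R be a modulus of T (adjointable, R* = R, ⟨Rx,x⟩ ≥ 0 for all x, R∘R = T*∘T) and R′ a modulus of T* (adjointable, R′* = R′, ⟨R′x,x⟩ ≥ 0 for all x, R′∘R′ = T∘T*). Suppose there is an adjointable W : E → E with ‖W‖ ≤ 1 and adjoint W* satisfying W∘R∘W* = R′ and W*∘R′∘W = R (these identities hold for the partial isometry in the polar decomposition of T whenever E = ker T ⊕ closure(ran T*) = ker T* ⊕ closure(ran T)). Then π̃₁(T) = π̃₁(T*), i.e. sup{ ‖Σᵢ₌₁ⁿ ⟨Rxᵢ,xᵢ⟩‖ : n ∈ ℕ, μₙ(x₁,…,xₙ) ≤ 1 } = sup{ ‖Σᵢ₌₁ⁿ ⟨R′xᵢ,xᵢ⟩‖ : n ∈ ℕ, μₙ(x₁,…,xₙ) ≤ 1 }. -/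

import Mathlib

open scoped InnerProductSpace RightActions ENNReal

noncomputable section

/-- The Mathlib (December 2024) class `CStarModule`: a Hilbert C⋆-module with a *right*
`A`-action given through `SMul Aᵐᵒᵖ E`, with `⟪x, y <• a⟫ = ⟪x, y⟫ * a`. -/
class CStarModuleRight (A : outParam <| Type*) (E : Type*) [NonUnitalSemiring A] [StarRing A] [Module ℂ A]
    [AddCommGroup E] [Module ℂ E] [PartialOrder A] [SMul Aᵐᵒᵖ E] [Norm A] [Norm E]
    extends Inner A E where
  inner_add_right {x} {y} {z} : inner x (y + z) = inner x y + inner x z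
  inner_self_nonneg {x} : 0 ≤ inner x x
  inner_self {x} : inner x x = 0 ↔ x = 0
  inner_op_smul_right {a : A} {x y : E} : inner x (y <• a) = inner x y * a
  inner_smul_right_complex {z : ℂ} {x} {y} : inner x (z • y) = z • inner x y
  star_inner x y : star (inner x y) = inner y x
  norm_eq_sqrt_norm_inner_self x : ‖x‖ = Real.sqrt ‖inner x x‖

variable {A : Type*} [NonUnitalCStarAlgebra A] [PartialOrder A] [StarOrderedRing A]
variable {E : Type*} [NormedAddCommGroup E] [NormedSpace ℂ E] [SMul Aᵐᵒᵖ E]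
  [CStarModuleRight A E] [CompleteSpace E]
variable {F : Type*} [NormedAddCommGroup F] [NormedSpace ℂ F] [SMul Aᵐᵒᵖ F]
  [CStarModuleRight A F] [CompleteSpace F]

/-- `μₙ(x₁,…,xₙ) = sup { ‖Σᵢ ⟪xᵢ, y⟫⟪y, xᵢ⟫‖^(1/2) : y ∈ E, ‖y‖ ≤ 1 }`. -/
def mu {G : Type*} [NormedAddCommGroup G] [NormedSpace ℂ G] [SMul Aᵐᵒᵖ G]
    [CStarModuleRight A G] {n : ℕ} (x : Fin n → G) : ℝ :=
  ⨆ y : {y : G // ‖y‖ ≤ 1}, Real.sqrt ‖∑ i, ⟪x i, (y : G)⟫_A * ⟪(y : G), x i⟫_A‖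

/-- `π̃₂(T) = sup { ‖Σᵢ ⟪Txᵢ, Txᵢ⟫‖^(1/2) : n ∈ ℕ, μₙ(x₁,…,xₙ) ≤ 1 }` as an element
of `[0,∞]`. -/
def piTwo {G H : Type*} [NormedAddCommGroup G] [NormedSpace ℂ G] [SMul Aᵐᵒᵖ G]
    [CStarModuleRight A G] [NormedAddCommGroup H] [NormedSpace ℂ H] [SMul Aᵐᵒᵖ H]
    [CStarModuleRight A H] (T : G → H) : ℝ≥0∞ :=
  ⨆ (n : ℕ) (x : Fin n → G) (_ : mu x ≤ 1),
    ENNReal.ofReal (Real.sqrt ‖∑ i, ⟪T (x i), T (x i)⟫_A‖)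

/-- Given (the underlying function of) a modulus `R = |T|` of an operator `T`,
`π̃₁(T) = sup { ‖Σᵢ ⟪Rxᵢ, xᵢ⟫‖ : n ∈ ℕ, μₙ(x₁,…,xₙ) ≤ 1 }` as an element of `[0,∞]`. -/
def piOne {G : Type*} [NormedAddCommGroup G] [NormedSpace ℂ G] [SMul Aᵐᵒᵖ G]
    [CStarModuleRight A G] (R : G → G) : ℝ≥0∞ :=
  ⨆ (n : ℕ) (x : Fin n → G) (_ : mu x ≤ 1),
    ENNReal.ofReal ‖∑ i, ⟪R (x i), x i⟫_A‖

lemma csr_star_inner (x y : E) : star ⟪x, y⟫_A = ⟪y, x⟫_A := CStarModuleRight.star_inner x y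

lemma csr_inner_add_left (x y z : E) : ⟪x + y, z⟫_A = ⟪x, z⟫_A + ⟪y, z⟫_A := by
  have h := congrArg star (CStarModuleRight.inner_add_right (A := A) (x := z) (y := x) (z := y))
  simpa only [star_add, csr_star_inner] using h

def csrInnerR (x : E) : E →+ A :=
  AddMonoidHom.mk' (fun y => ⟪x, y⟫_A) (fun _ _ => CStarModuleRight.inner_add_right)

def csrInnerL (y : E) : E →+ A :=
  AddMonoidHom.mk' (fun x => ⟪x, y⟫_A) (fun a b => csr_inner_add_left a b y)

lemma csr_inner_sub_right (x y z : E) : ⟪x, y - z⟫_A = ⟪x, y⟫_A - ⟪x, z⟫_A :=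
  map_sub (csrInnerR (A := A) x) y z

lemma csr_inner_sub_left (x y z : E) : ⟪x - y, z⟫_A = ⟪x, z⟫_A - ⟪y, z⟫_A :=
  map_sub (csrInnerL (A := A) z) x y

lemma csr_inner_zero_left (y : E) : ⟪(0 : E), y⟫_A = 0 :=
  map_zero (csrInnerL (A := A) y)

lemma csr_smul_right_real (r : ℝ) (x y : E) : ⟪x, r • y⟫_A = r • ⟪x, y⟫_A := by
  have h₁ : r • y = (r : ℂ) • y := by simp
  rw [h₁, CStarModuleRight.inner_smul_right_complex]
  simp

lemma csr_smul_left_real (r : ℝ) (x y : E) : ⟪r • x, y⟫_A = r • ⟪x, y⟫_A := by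
  rw [← csr_star_inner y, csr_smul_right_real, star_smul, csr_star_inner]
  simp

lemma csr_op_smul_left (a : A) (x y : E) : ⟪x <• a, y⟫_A = star a * ⟪x, y⟫_A := by
  rw [← csr_star_inner y, CStarModuleRight.inner_op_smul_right, star_mul, csr_star_inner]

lemma csr_norm_sq_eq {x : E} : ‖x‖ ^ 2 = ‖⟪x, x⟫_A‖ := by
  rw [CStarModuleRight.norm_eq_sqrt_norm_inner_self (A := A) x, Real.sq_sqrt (norm_nonneg _)]

lemma csr_inner_swap_le (x y : E) :
    ⟪y, x⟫_A * ⟪x, y⟫_A ≤ ‖x‖ ^ 2 • ⟪y, y⟫_A := by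
  rcases eq_or_ne x 0 with h | h
  · subst h
    rw [csr_inner_zero_left, ← csr_star_inner (0 : E), csr_inner_zero_left]
    simp
  have hpos : 0 < ‖x‖ ^ 2 := pow_pos (norm_pos_iff.mpr h) 2
  set c : ℝ := ‖x‖ ^ 2 with hcdef
  have hc : c = ‖⟪x, x⟫_A‖ := csr_norm_sq_eq
  have h0 : (0 : A) ≤ ⟪x <• ⟪x, y⟫_A - c • y, x <• ⟪x, y⟫_A - c • y⟫_A :=
    CStarModuleRight.inner_self_nonneg
  have hexp : ⟪x <• ⟪x, y⟫_A - c • y, x <• ⟪x, y⟫_A - c • y⟫_A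
      = ⟪y, x⟫_A * (⟪x, x⟫_A * ⟪x, y⟫_A) - c • (⟪y, x⟫_A * ⟪x, y⟫_A)
        - c • (⟪y, x⟫_A * ⟪x, y⟫_A) + c • (c • ⟪y, y⟫_A) := by
    simp only [csr_inner_sub_left, csr_inner_sub_right, csr_op_smul_left,
      CStarModuleRight.inner_op_smul_right, csr_smul_left_real, csr_smul_right_real,
      csr_star_inner, mul_sub, sub_mul, smul_sub, mul_smul_comm, smul_mul_assoc, mul_assoc]
    abel
  have hle : ⟪y, x⟫_A * (⟪x, x⟫_A * ⟪x, y⟫_A) ≤ c • (⟪y, x⟫_A * ⟪x, y⟫_A) := by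
    have := CStarAlgebra.star_left_conjugate_le_norm_smul (a := ⟪x, y⟫_A) (b := ⟪x, x⟫_A)
      (hb := csr_star_inner x x)
    rw [csr_star_inner, mul_assoc] at this
    rw [hc]; exact this
  have key : c • (⟪y, x⟫_A * ⟪x, y⟫_A) ≤ c • (c • ⟪y, y⟫_A) := by
    rw [← sub_nonneg]
    have e : c • (c • ⟪y, y⟫_A) - c • (⟪y, x⟫_A * ⟪x, y⟫_A)
        = (⟪y, x⟫_A * (⟪x, x⟫_A * ⟪x, y⟫_A) - c • (⟪y, x⟫_A * ⟪x, y⟫_A)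
          - c • (⟪y, x⟫_A * ⟪x, y⟫_A) + c • (c • ⟪y, y⟫_A))
          + (c • (⟪y, x⟫_A * ⟪x, y⟫_A) - ⟪y, x⟫_A * (⟪x, x⟫_A * ⟪x, y⟫_A)) := by abel
    rw [e]
    exact add_nonneg (hexp ▸ h0) (sub_nonneg.mpr hle)
  exact (smul_le_smul_iff_of_pos_left hpos).mp key

lemma csr_norm_inner_le {x y : E} : ‖⟪x, y⟫_A‖ ≤ ‖x‖ * ‖y‖ := by
  have := calc ‖⟪x, y⟫_A‖ ^ 2 = ‖⟪y, x⟫_A * ⟪x, y⟫_A‖ := by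
                rw [← csr_star_inner x, CStarRing.norm_star_mul_self, pow_two]
    _ ≤ ‖‖x‖ ^ 2 • ⟪y, y⟫_A‖ := by
                refine CStarAlgebra.norm_le_norm_of_nonneg_of_le ?_ (csr_inner_swap_le x y)
                rw [← csr_star_inner x]
                exact star_mul_self_nonneg ⟪x, y⟫_A
    _ = ‖x‖ ^ 2 * ‖⟪y, y⟫_A‖ := by simp [norm_smul]
    _ = ‖x‖ ^ 2 * ‖y‖ ^ 2 := by rw [csr_norm_sq_eq (x := y)]
    _ = (‖x‖ * ‖y‖) ^ 2 := by simp only [mul_pow]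
  refine (pow_le_pow_iff_left₀ (norm_nonneg ⟪x, y⟫_A) ?_ (by simp)).mp this
  exact mul_nonneg (norm_nonneg _) (norm_nonneg _)

lemma bdd_mu {n : ℕ} (x : Fin n → E) :
    BddAbove (Set.range fun y : {y : E // ‖y‖ ≤ 1} =>
      Real.sqrt ‖∑ i, ⟪x i, (y : E)⟫_A * ⟪(y : E), x i⟫_A‖) := by
  refine ⟨Real.sqrt (∑ i, ‖x i‖ ^ 2), ?_⟩
  rintro - ⟨⟨y, hy⟩, rfl⟩
  apply Real.sqrt_le_sqrt
  calc ‖∑ i, ⟪x i, y⟫_A * ⟪y, x i⟫_A‖ ≤ ∑ i, ‖⟪x i, y⟫_A * ⟪y, x i⟫_A‖ :=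
        norm_sum_le _ _
    _ ≤ ∑ i, ‖x i‖ ^ 2 := by
        refine Finset.sum_le_sum fun i _ => ?_
        calc ‖⟪x i, y⟫_A * ⟪y, x i⟫_A‖ ≤ ‖⟪x i, y⟫_A‖ * ‖⟪y, x i⟫_A‖ := norm_mul_le _ _
          _ ≤ (‖x i‖ * ‖y‖) * (‖y‖ * ‖x i‖) := by
              gcongr <;> exact csr_norm_inner_le
          _ ≤ ‖x i‖ ^ 2 := by
              have hb : ‖y‖ * ‖y‖ ≤ 1 := mul_le_one₀ hy (norm_nonneg y) hy
              nlinarith [hb, sq_nonneg (‖x i‖)]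

lemma mu_comp_le {n : ℕ} (x : Fin n → E) (V V' : E →L[ℂ] E)
    (hV : ∀ (a b : E), ⟪V a, b⟫_A = ⟪a, V' b⟫_A)
    (hV'n : ∀ b : E, ‖V' b‖ ≤ ‖b‖) :
    mu (A := A) (fun i => V (x i)) ≤ mu x := by
  unfold mu
  haveI : Nonempty {y : E // ‖y‖ ≤ 1} := ⟨⟨0, by simp⟩⟩
  refine ciSup_le fun ⟨y, hy⟩ => ?_
  have key : ∀ i, ⟪V (x i), y⟫_A * ⟪y, V (x i)⟫_A
      = ⟪x i, V' y⟫_A * ⟪V' y, x i⟫_A := by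
    intro i
    have h1 : ⟪V (x i), y⟫_A = ⟪x i, V' y⟫_A := hV _ _
    have h2 : ⟪y, V (x i)⟫_A = ⟪V' y, x i⟫_A := by
      rw [← CStarModuleRight.star_inner, h1, CStarModuleRight.star_inner]
    rw [h1, h2]
  simp only [key]
  exact le_ciSup (bdd_mu x) ⟨V' y, (hV'n y).trans hy⟩

lemma piOne_le_aux (R R' V V' : E →L[ℂ] E)
    (hV : ∀ (a b : E), ⟪V a, b⟫_A = ⟪a, V' b⟫_A)
    (hV'n : ∀ b : E, ‖V' b‖ ≤ ‖b‖)
    (h : V'.comp (R'.comp V) = R) : piOne (A := A) ⇑R ≤ piOne (A := A) ⇑R' := by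
  refine iSup_le fun n => iSup_le fun x => iSup_le fun hmu => ?_
  have hmu' : mu (A := A) (fun i => V (x i)) ≤ 1 :=
    (mu_comp_le x V V' hV hV'n).trans hmu
  have key : ∀ i, ⟪R (x i), x i⟫_A = ⟪R' (V (x i)), V (x i)⟫_A := by
    intro i
    have hRx : R (x i) = V' (R' (V (x i))) := by rw [← h]; rfl
    rw [hRx, ← CStarModuleRight.star_inner, ← hV, CStarModuleRight.star_inner]
  calc ENNReal.ofReal ‖∑ i, ⟪R (x i), x i⟫_A‖
      = ENNReal.ofReal ‖∑ i, ⟪R' (V (x i)), V (x i)⟫_A‖ := by simp only [key]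
    _ ≤ piOne (A := A) ⇑R' :=
        le_iSup_of_le n (le_iSup_of_le (fun i => V (x i)) (le_iSup_of_le hmu' le_rfl))

lemma adjoint_contraction (W W' : E →L[ℂ] E)
    (hW : ∀ (a b : E), ⟪W a, b⟫_A = ⟪a, W' b⟫_A)
    (hWnorm : ‖W‖ ≤ 1) : ∀ b : E, ‖W' b‖ ≤ ‖b‖ := by
  intro b
  rcases eq_or_ne (W' b) 0 with h0 | h0
  · simp [h0]
  have hpos : 0 < ‖W' b‖ := norm_pos_iff.mpr h0
  have h1 : ‖W' b‖ ^ 2 = ‖⟪W (W' b), b⟫_A‖ := by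
    rw [hW, csr_norm_sq_eq (A := A)]
  have h2 : ‖⟪W (W' b), b⟫_A‖ ≤ ‖W (W' b)‖ * ‖b‖ := csr_norm_inner_le
  have h3 : ‖W (W' b)‖ ≤ ‖W' b‖ := by
    calc ‖W (W' b)‖ ≤ ‖W‖ * ‖W' b‖ := W.le_opNorm _
      _ ≤ 1 * ‖W' b‖ := by gcongr
      _ = ‖W' b‖ := one_mul _
  have h4 : ‖W' b‖ ^ 2 ≤ ‖W' b‖ * ‖b‖ := by
    calc ‖W' b‖ ^ 2 ≤ ‖W (W' b)‖ * ‖b‖ := h1 ▸ h2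
      _ ≤ ‖W' b‖ * ‖b‖ := by gcongr
  nlinarith [h4]

/-- If `T : E → E` is adjointable with adjoint `T'`, `R` is a modulus of `T`, `R'` a modulus
of `T*`, and there is an adjointable contraction `W` with `W∘R∘W* = R'` and `W*∘R'∘W = R`
(as holds for the partial isometry in the polar decomposition of `T`), then
`π̃₁(T) = π̃₁(T*)`. -/
theorem piOne_eq_piOne_adjoint (T : E →L[ℂ] E) (T' : E →L[ℂ] E)
    (hT : ∀ (x y : E), ⟪T x, y⟫_A = ⟪x, T' y⟫_A)
    (R : E →L[ℂ] E)
    (hRsa : ∀ (x y : E), ⟪R x, y⟫_A = ⟪x, R y⟫_A)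
    (hRpos : ∀ x : E, 0 ≤ ⟪R x, x⟫_A)
    (hRR : R.comp R = T'.comp T)
    (R' : E →L[ℂ] E)
    (hR'sa : ∀ (x y : E), ⟪R' x, y⟫_A = ⟪x, R' y⟫_A)
    (hR'pos : ∀ x : E, 0 ≤ ⟪R' x, x⟫_A)
    (hR'R' : R'.comp R' = T.comp T')
    (W : E →L[ℂ] E) (W' : E →L[ℂ] E)
    (hW : ∀ (x y : E), ⟪W x, y⟫_A = ⟪x, W' y⟫_A)
    (hWnorm : ‖W‖ ≤ 1)
    (hW1 : (W.comp (R.comp W')) = R')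
    (hW2 : (W'.comp (R'.comp W)) = R) :
    piOne (⇑R) = piOne (⇑R') := by
  have hW'adj : ∀ (a b : E), ⟪W' a, b⟫_A = ⟪a, W b⟫_A := by
    intro a b
    rw [← CStarModuleRight.star_inner, ← hW, CStarModuleRight.star_inner]
  have hW'n : ∀ b : E, ‖W' b‖ ≤ ‖b‖ := adjoint_contraction W W' hW hWnorm
  have hWn : ∀ b : E, ‖W b‖ ≤ ‖b‖ := fun b => by
    calc ‖W b‖ ≤ ‖W‖ * ‖b‖ := W.le_opNorm b
      _ ≤ 1 * ‖b‖ := by gcongr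
      _ = ‖b‖ := one_mul _
  exact le_antisymm (piOne_le_aux R R' W W' hW hW'n hW2)
    (piOne_le_aux R' R W' W hW'adj hWn hW1)
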